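/- Let L > 0 and α > 0 be real, and define P_out(ξ) = (γ(L, ξ) − ξ^{−2/α} γ(L + 2/α, ξ)) / Γ(L) for ξ > 0. Then P_out is strictly increasing on (0, ∞). -/

import Mathlib

open Real

/-- The lower incomplete Gamma function `γ(s, x) = ∫_0^x t^{s−1} e^{−t} dt`. -/
noncomputable def lowerIncompleteGamma (s x : ℝ) : ℝ :=
  ∫ t in (0:ℝ)..x, t ^ (s - 1) * Real.exp (-t)

/-- The computation-outage probability of Lemma 1. -/
noncomputable def Pout (L α ξ : ℝ) : ℝ :=
  (lowerIncompleteGamma L ξ - ξ ^ (-(2 / α)) * lowerIncompleteGamma (L + 2 / α) ξ) /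
    Real.Gamma L

open MeasureTheory intervalIntegral Set in
lemma lig_intervalIntegrable {s x : ℝ} (hs : 0 < s) (hx : 0 ≤ x) :
    IntervalIntegrable (fun t => t ^ (s - 1) * Real.exp (-t)) volume 0 x := by
  rw [intervalIntegrable_iff_integrableOn_Ioc_of_le hx]
  have := (Real.GammaIntegral_convergent hs).mono_set (Ioc_subset_Ioi_self : Ioc (0:ℝ) x ⊆ Ioi 0)
  simpa [mul_comm] using this

open MeasureTheory intervalIntegral Set in
lemma lig_hasDerivAt {s x : ℝ} (hs : 0 < s) (hx : 0 < x) :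
    HasDerivAt (lowerIncompleteGamma s) (x ^ (s - 1) * Real.exp (-x)) x := by
  have hcont : ContinuousOn (fun t : ℝ => t ^ (s - 1) * Real.exp (-t)) (Ioi 0) := by
    intro t ht
    exact ((Real.continuousAt_rpow_const t (s-1) (Or.inl (ne_of_gt ht))).mul
      ((Real.continuous_exp.comp continuous_neg).continuousAt)).continuousWithinAt
  exact integral_hasDerivAt_right (lig_intervalIntegrable hs hx.le)
    (hcont.stronglyMeasurableAtFilter isOpen_Ioi x hx)
    ((hcont x hx).continuousAt (isOpen_Ioi.mem_nhds hx))

open MeasureTheory intervalIntegral Set in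
lemma lig_pos {s x : ℝ} (hs : 0 < s) (hx : 0 < x) : 0 < lowerIncompleteGamma s x := by
  apply intervalIntegral_pos_of_pos_on (lig_intervalIntegrable hs hx.le) _ hx
  intro t ht
  exact mul_pos (Real.rpow_pos_of_pos ht.1 _) (Real.exp_pos _)

lemma Pout_hasDerivAt {L α x : ℝ} (hL : 0 < L) (hα : 0 < α) (hx : 0 < x) :
    HasDerivAt (Pout L α)
      ((2 / α) * x ^ (-(2 / α) - 1) * lowerIncompleteGamma (L + 2 / α) x / Real.Gamma L) x := by
  have hL2 : 0 < L + 2 / α := by positivity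
  have h1 := lig_hasDerivAt hL hx
  have h2 := lig_hasDerivAt hL2 hx
  have h3 : HasDerivAt (fun ξ : ℝ => ξ ^ (-(2 / α))) (-(2 / α) * x ^ (-(2 / α) - 1)) x :=
    Real.hasDerivAt_rpow_const (Or.inl hx.ne')
  have h := ((h1.sub (h3.mul h2)).div_const (Real.Gamma L))
  have key : x ^ (-(2 / α)) * x ^ (L + 2 / α - 1) = x ^ (L - 1) := by
    rw [← Real.rpow_add hx]; congr 1; ring
  refine h.congr_deriv ?_
  rw [← mul_assoc, key]; ring

/-- **Corollary 1**, monotonicity: the computation-outage probability `P_out` is a strictly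
increasing function of `ξ` on `(0, ∞)`. -/
theorem outage_probability_strictMono (L α : ℝ) (hL : 0 < L) (hα : 0 < α) :
    StrictMonoOn (Pout L α) (Set.Ioi 0) := by
  have hL2 : 0 < L + 2 / α := by positivity
  apply strictMonoOn_of_deriv_pos (convex_Ioi 0)
  · intro x hx
    exact (Pout_hasDerivAt hL hα hx).continuousAt.continuousWithinAt
  · intro x hx
    rw [interior_Ioi] at hx
    rw [(Pout_hasDerivAt hL hα hx).deriv]
    exact div_pos (mul_pos (mul_pos (by positivity) (Real.rpow_pos_of_pos hx _))
      (lig_pos hL2 hx)) (Real.Gamma_pos_of_pos hL)
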